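/- There exists a universal constant K0 > 0 such that in the Bernoulli model setup with θ ≠ 0, if ε/τ < min_{j : θ(j) > 0} θ(j), then the sequence s_n = 2Wτ Σ_{j : θ(j) > 0} θ(j) φ(τ√n/√(1 − τ²); ε/(θ(j)τ)) is strictly increasing on the range of integers n with n < (1/τ² − 1) · max{3/2, 2 min_{j : θ(j) > 0} log(1/(1 − ε/(θ(j)τ)))}, and strictly decreasing on the range of integers n with n ≥ (1/τ² − 1) · (K0 + 2 max_{j : θ(j) > 0} log(1/(1 − ε/(θ(j)τ)))). -/

import Mathlib

open Real Finset MeasureTheory ProbabilityTheory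

/-- The CDF of the standard normal distribution. -/
noncomputable def stdNormalCDF (x : ℝ) : ℝ := cdf (gaussianReal 0 1) x

/-- `phi δ x = 2Φ(x) − Φ(x(1+δ)) − Φ(x(1−δ))`. -/
noncomputable def phi (δ x : ℝ) : ℝ :=
  2 * stdNormalCDF x - stdNormalCDF (x * (1 + δ)) - stdNormalCDF (x * (1 - δ))

/-- The strip center `s_n = 2Wτ Σ_{j : θ(j) > 0} θ(j) φ(τ√n/√(1−τ²); ε/(θ(j)τ))`. -/
noncomputable def berStrip (d : ℕ) (W ε : ℝ) (θ : Fin d → ℝ) (τ : ℝ) (n : ℕ) : ℝ :=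
  2 * W * τ * ∑ j ∈ Finset.univ.filter (fun j => 0 < θ j),
    θ j * phi (ε / (θ j * τ)) (τ * Real.sqrt n / Real.sqrt (1 - τ ^ 2))

/-! ### Auxiliary facts about the standard normal CDF -/

lemma stdNormalCDF_eq (x : ℝ) :
    stdNormalCDF x = ∫ t in Set.Iic x, gaussianPDFReal 0 1 t := by
  rw [stdNormalCDF, cdf_eq_real, measureReal_def,
    gaussianReal_apply_eq_integral 0 one_ne_zero (Set.Iic x), ENNReal.toReal_ofReal]
  exact setIntegral_nonneg measurableSet_Iic fun t _ => gaussianPDFReal_nonneg 0 1 t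

lemma continuous_gaussianPDFReal : Continuous (gaussianPDFReal 0 1) := by
  unfold gaussianPDFReal
  fun_prop

lemma hasDerivAt_stdNormalCDF (x : ℝ) :
    HasDerivAt stdNormalCDF (gaussianPDFReal 0 1 x) x := by
  have hint := integrable_gaussianPDFReal 0 1
  have key : stdNormalCDF = fun y =>
      (∫ t in (0:ℝ)..y, gaussianPDFReal 0 1 t) + stdNormalCDF 0 := by
    funext y
    rw [← intervalIntegral.integral_Iic_sub_Iic hint.integrableOn hint.integrableOn,
      ← stdNormalCDF_eq, ← stdNormalCDF_eq]
    ring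
  rw [key]
  exact (intervalIntegral.integral_hasDerivAt_right hint.intervalIntegrable
    (continuous_gaussianPDFReal.stronglyMeasurableAtFilter _ _)
    continuous_gaussianPDFReal.continuousAt).add_const _

/-! ### The function `H` controlling the sign of the derivative of `phi` -/

noncomputable def Haux (δ t : ℝ) : ℝ :=
  (1 + δ) * Real.exp (-(2 + δ) * t) + (1 - δ) * Real.exp ((2 - δ) * t)

lemma exp_neg_quad {a : ℝ} (_ha : 0 ≤ a) : Real.exp (-a) ≤ 1 - a + a ^ 2 / 2 := by
  have h := Real.quadratic_le_exp_of_nonneg _ha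
  have hp : (0:ℝ) < 1 - a + a ^ 2 / 2 := by nlinarith [sq_nonneg (a - 1)]
  rw [Real.exp_neg, inv_le_iff_one_le_mul₀ (Real.exp_pos a)]
  nlinarith [Real.exp_pos a, sq_nonneg a]

lemma exp_le_quad {b : ℝ} (hb0 : 0 ≤ b) (hb1 : b ≤ 1) :
    Real.exp b ≤ 1 + b + 3 / 4 * b ^ 2 := by
  have h := Real.exp_bound (n := 2) (by rw [abs_of_nonneg hb0]; exact hb1) (by norm_num)
  rw [abs_of_nonneg hb0] at h
  have h2 := (abs_sub_le_iff.mp h).1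
  simp [Finset.sum_range_succ, Nat.factorial] at h2
  nlinarith [h2]

lemma exp_34_le : Real.exp (3 / 4) ≤ 100 / 47 := by
  have h := Real.exp_bound' (x := 3 / 4) (by norm_num) (by norm_num) (n := 4) (by norm_num)
  simp [Finset.sum_range_succ, Nat.factorial] at h
  nlinarith [h]

lemma P1 {δ : ℝ} (hδ0 : 0 < δ) (hδ1 : δ < 1) :
    Haux δ (δ / 2 * max (3 / 2) (2 * Real.log (1 / (1 - δ)))) ≤ 2 := by
  set L := Real.log (1 / (1 - δ)) with hLdef
  have h1δ : 0 < 1 - δ := by linarith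
  have hexpL : 1 - δ = Real.exp (-L) := by
    rw [hLdef, one_div, Real.log_inv, neg_neg, Real.exp_log h1δ]
  have hL0 : 0 < L := Real.log_pos (by rw [lt_div_iff₀ h1δ]; linarith)
  rcases le_total (2 * L) (3 / 2) with hc | hc
  · -- Case A : threshold 3/2, so L ≤ 3/4 and δ ≤ 53/100
    rw [max_eq_left hc]
    have hδ53 : δ ≤ 53 / 100 := by
      have h1 : Real.exp (-(3 / 4)) ≤ Real.exp (-L) := by
        apply Real.exp_le_exp.mpr; linarith
      have h2 : (47 : ℝ) / 100 ≤ Real.exp (-(3 / 4)) := by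
        rw [Real.exp_neg]
        rw [le_inv_comm₀ (by norm_num) (Real.exp_pos _)]
        calc Real.exp (3/4) ≤ 100/47 := exp_34_le
          _ ≤ (47/100 : ℝ)⁻¹ := by norm_num
      nlinarith [hexpL]
    set t₁ : ℝ := δ / 2 * (3 / 2) with ht₁
    have ht₁0 : 0 ≤ t₁ := by positivity
    have ha : Real.exp (-(2 + δ) * t₁) ≤ 1 - (2 + δ) * t₁ + ((2 + δ) * t₁) ^ 2 / 2 := by
      have := exp_neg_quad (a := (2 + δ) * t₁) (by positivity)
      rwa [show -((2 + δ) * t₁) = -(2 + δ) * t₁ by ring] at this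
    have hb : Real.exp ((2 - δ) * t₁) ≤ 1 + (2 - δ) * t₁ + 3 / 4 * ((2 - δ) * t₁) ^ 2 := by
      apply exp_le_quad (by nlinarith) (by nlinarith)
    unfold Haux
    have hc1 : (1 + δ) * Real.exp (-(2 + δ) * t₁)
        ≤ (1 + δ) * (1 - (2 + δ) * t₁ + ((2 + δ) * t₁) ^ 2 / 2) := by
      apply mul_le_mul_of_nonneg_left ha (by linarith)
    have hc2 : (1 - δ) * Real.exp ((2 - δ) * t₁)
        ≤ (1 - δ) * (1 + (2 - δ) * t₁ + 3 / 4 * ((2 - δ) * t₁) ^ 2) := by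
      apply mul_le_mul_of_nonneg_left hb (by linarith)
    have : (1 + δ) * (1 - (2 + δ) * t₁ + ((2 + δ) * t₁) ^ 2 / 2)
        + (1 - δ) * (1 + (2 - δ) * t₁ + 3 / 4 * ((2 - δ) * t₁) ^ 2) ≤ 2 := by
      rw [ht₁]
      nlinarith [sq_nonneg δ, hδ53, hδ0.le]
    linarith
  · -- Case B : threshold 2L, so 3/4 ≤ L and δ ≥ 1/2
    rw [max_eq_right hc]
    have hL34 : 3 / 4 ≤ L := by linarith
    have hδhalf : 1 / 2 ≤ δ := by
      have h1 : Real.exp (-L) ≤ Real.exp (-(3 / 4)) := by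
        apply Real.exp_le_exp.mpr; linarith
      have h2 : Real.exp (-(3 / 4)) ≤ 1 / 2 := by
        rw [Real.exp_neg, inv_le_comm₀ (Real.exp_pos _) (by norm_num)]
        have := Real.quadratic_le_exp_of_nonneg (x := 3 / 4) (by norm_num)
        norm_num at this ⊢
        linarith
      nlinarith [hexpL]
    have ht₁ : δ / 2 * (2 * L) = δ * L := by ring
    rw [ht₁]
    unfold Haux
    have hterm1 : (1 + δ) * Real.exp (-(2 + δ) * (δ * L)) ≤ 1 := by
      have hexp : Real.exp (-(2 + δ) * (δ * L)) ≤ Real.exp (-(15 / 16)) := by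
        apply Real.exp_le_exp.mpr
        have h38 : (1:ℝ)/2 * (3/4) ≤ δ * L :=
          mul_le_mul hδhalf hL34 (by norm_num) hδ0.le
        nlinarith [h38]
      have h12 : Real.exp (-(15 / 16)) ≤ 1 / 2 := by
        rw [Real.exp_neg, inv_le_comm₀ (Real.exp_pos _) (by norm_num)]
        have := Real.quadratic_le_exp_of_nonneg (x := 15 / 16) (by norm_num)
        norm_num at this ⊢
        linarith
      nlinarith [Real.exp_pos (-(2 + δ) * (δ * L))]
    have hterm2 : (1 - δ) * Real.exp ((2 - δ) * (δ * L)) ≤ 1 := by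
      rw [hexpL, ← Real.exp_add]
      rw [Real.exp_le_one_iff]
      nlinarith [sq_nonneg (1 - δ)]
    linarith

lemma Haux_zero (δ : ℝ) : Haux δ 0 = 2 := by simp [Haux]; ring

lemma Haux_conv {δ : ℝ} (hδ0 : 0 < δ) (hδ1 : δ < 1) {x y a b : ℝ} (hxy : x ≠ y)
    (ha : 0 < a) (hb : 0 < b) (hab : a + b = 1) :
    Haux δ (a * x + b * y) < a * Haux δ x + b * Haux δ y := by
  have h1 := strictConvexOn_exp.2 (Set.mem_univ (-(2 + δ) * x)) (Set.mem_univ (-(2 + δ) * y))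
    (by
      have h : -(2 + δ) ≠ 0 := by nlinarith
      exact fun h' => hxy (mul_left_cancel₀ h h')) ha hb hab
  have h2 := strictConvexOn_exp.2 (Set.mem_univ ((2 - δ) * x)) (Set.mem_univ ((2 - δ) * y))
    (by
      have h : (2 - δ) ≠ 0 := by nlinarith
      exact fun h' => hxy (mul_left_cancel₀ h h')) ha hb hab
  simp only [smul_eq_mul] at h1 h2
  have e1 : -(2 + δ) * (a * x + b * y) = a * (-(2 + δ) * x) + b * (-(2 + δ) * y) := by ring
  have e2 : (2 - δ) * (a * x + b * y) = a * ((2 - δ) * x) + b * ((2 - δ) * y) := by ring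
  unfold Haux
  rw [e1, e2]
  nlinarith [h1, h2]

lemma P2 {δ : ℝ} (hδ0 : 0 < δ) (hδ1 : δ < 1) :
    2 < Haux δ (δ * (11 + Real.log (1 / (1 - δ)))) := by
  set L := Real.log (1 / (1 - δ)) with hLdef
  have h1δ : 0 < 1 - δ := by linarith
  have hexpL : 1 - δ = Real.exp (-L) := by
    rw [hLdef, one_div, Real.log_inv, neg_neg, Real.exp_log h1δ]
  have hL0 : 0 < L := Real.log_pos (by rw [lt_div_iff₀ h1δ]; linarith)
  set T : ℝ := δ * (11 + L) with hT
  have hT0 : 0 < T := by positivity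
  have hT11 : 11 * δ < T := by nlinarith
  unfold Haux
  rcases lt_or_ge δ (1 / 2) with hsm | hlg
  · have hA : 1 - (2 + δ) * T ≤ Real.exp (-(2 + δ) * T) := by
      have := Real.add_one_le_exp (-((2 + δ) * T))
      rw [show -(2 + δ) * T = -((2 + δ) * T) by ring]
      linarith
    have hB : 1 + (2 - δ) * T + ((2 - δ) * T) ^ 2 / 2 ≤ Real.exp ((2 - δ) * T) := by
      exact Real.quadratic_le_exp_of_nonneg (by nlinarith)
    have hc1 : (1 + δ) * (1 - (2 + δ) * T) ≤ (1 + δ) * Real.exp (-(2 + δ) * T) :=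
      mul_le_mul_of_nonneg_left hA (by linarith)
    have hc2 : (1 - δ) * (1 + (2 - δ) * T + ((2 - δ) * T) ^ 2 / 2)
        ≤ (1 - δ) * Real.exp ((2 - δ) * T) :=
      mul_le_mul_of_nonneg_left hB (by linarith)
    have h98 : (9 : ℝ) / 8 ≤ (1 - δ) * (2 - δ) ^ 2 := by nlinarith
    have hkey : 12 * δ < (1 - δ) * (2 - δ) ^ 2 * T := by
      nlinarith [mul_le_mul_of_nonneg_right h98 hT0.le]
    nlinarith [hc1, hc2, mul_pos hT0 hT0]
  · have hterm1 : 0 < (1 + δ) * Real.exp (-(2 + δ) * T) := by positivity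
    have hLu : L * (1 - δ) ^ 2 ≤ 1 / 4 := by
      have hl : L ≤ δ / (1 - δ) := by
        have h := Real.log_le_sub_one_of_pos (show (0:ℝ) < 1 / (1 - δ) by positivity)
        rw [← hLdef] at h
        have heq : 1 / (1 - δ) - 1 = δ / (1 - δ) := by field_simp; ring
        linarith [heq ▸ h]
      have hmul := mul_le_mul_of_nonneg_right hl (sq_nonneg (1 - δ))
      have heq2 : δ / (1 - δ) * (1 - δ) ^ 2 = δ * (1 - δ) := by
        field_simp
      nlinarith [heq2 ▸ hmul]
    have hexpo : 1 < -L + (2 - δ) * T := by nlinarith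
    have hlog2 : Real.log 2 ≤ 1 := by
      have := Real.log_le_sub_one_of_pos (show (0:ℝ) < 2 by norm_num)
      linarith
    have h2lt : 2 < (1 - δ) * Real.exp ((2 - δ) * T) := by
      rw [hexpL, ← Real.exp_add]
      calc (2:ℝ) = Real.exp (Real.log 2) := (Real.exp_log (by norm_num)).symm
        _ < Real.exp (-L + (2 - δ) * T) := Real.exp_lt_exp.mpr (by linarith)
    linarith

lemma key_pos {δ : ℝ} (hδ0 : 0 < δ) (hδ1 : δ < 1) {t : ℝ} (ht0 : 0 < t)
    (ht1 : t < δ / 2 * max (3 / 2) (2 * Real.log (1 / (1 - δ)))) : Haux δ t < 2 := by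
  set t₁ : ℝ := δ / 2 * max (3 / 2) (2 * Real.log (1 / (1 - δ))) with ht₁def
  have ht₁0 : 0 < t₁ := by
    have : (3:ℝ)/2 ≤ max (3 / 2) (2 * Real.log (1 / (1 - δ))) := le_max_left _ _
    positivity
  have ht₁ne : t₁ ≠ 0 := ne_of_gt ht₁0
  have hconv := Haux_conv hδ0 hδ1 (x := 0) (y := t₁)
    (a := (t₁ - t) / t₁) (b := t / t₁) (ne_of_gt ht₁0).symm
    (by apply div_pos; linarith; linarith) (by positivity)
    (by field_simp; ring)
  rw [show (t₁ - t) / t₁ * 0 + t / t₁ * t₁ = t by field_simp; ring, Haux_zero] at hconv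
  have hP1 := P1 hδ0 hδ1
  rw [← ht₁def] at hP1
  have hab : (t₁ - t) / t₁ + t / t₁ = 1 := by field_simp; ring
  have hmul := mul_le_mul_of_nonneg_left hP1 (div_pos ht0 ht₁0).le
  linarith [hconv, hmul, hab]

lemma key_neg {δ : ℝ} (hδ0 : 0 < δ) (hδ1 : δ < 1) {t : ℝ}
    (ht : δ * (11 + Real.log (1 / (1 - δ))) ≤ t) : 2 < Haux δ t := by
  set T : ℝ := δ * (11 + Real.log (1 / (1 - δ))) with hTdef
  have hL0 : 0 < Real.log (1 / (1 - δ)) :=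
    Real.log_pos (by rw [lt_div_iff₀ (by linarith : (0:ℝ) < 1 - δ)]; linarith)
  have hT0 : 0 < T := by positivity
  have hP2 := P2 hδ0 hδ1
  rw [← hTdef] at hP2
  rcases eq_or_lt_of_le ht with heq | hlt
  · rwa [← heq]
  · have ht0 : (0:ℝ) < t := lt_trans hT0 hlt
    have htne : t ≠ 0 := ne_of_gt ht0
    have hconv := Haux_conv hδ0 hδ1 (x := 0) (y := t)
      (a := (t - T) / t) (b := T / t) (ne_of_gt ht0).symm
      (by apply div_pos; linarith; linarith) (by positivity)
      (by field_simp; ring)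
    rw [show (t - T) / t * 0 + T / t * t = T by field_simp; ring, Haux_zero] at hconv
    have hab : (t - T) / t + T / t = 1 := by field_simp; ring
    by_contra hcon
    push_neg at hcon
    have hmul := mul_le_mul_of_nonneg_left hcon (div_pos hT0 ht0).le
    linarith [hconv, hmul, hab]

/-! ### Derivative of `phi` -/

lemma pdf_identity (δ x : ℝ) :
    2 * gaussianPDFReal 0 1 x - gaussianPDFReal 0 1 (x * (1 + δ)) * (1 + δ)
      - gaussianPDFReal 0 1 (x * (1 - δ)) * (1 - δ)
    = gaussianPDFReal 0 1 x * (2 - Haux δ (x ^ 2 * δ / 2)) := by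
  unfold gaussianPDFReal Haux
  push_cast
  have e1 : Real.exp (-(x * (1 + δ) - 0) ^ 2 / (2 * 1)) =
      Real.exp (-(x - 0) ^ 2 / (2 * 1)) * Real.exp (-(2 + δ) * (x ^ 2 * δ / 2)) := by
    rw [← Real.exp_add]; congr 1; ring
  have e2 : Real.exp (-(x * (1 - δ) - 0) ^ 2 / (2 * 1)) =
      Real.exp (-(x - 0) ^ 2 / (2 * 1)) * Real.exp ((2 - δ) * (x ^ 2 * δ / 2)) := by
    rw [← Real.exp_add]; congr 1; ring
  rw [e1, e2]
  ring

lemma hasDerivAt_phi (δ x : ℝ) :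
    HasDerivAt (phi δ) (gaussianPDFReal 0 1 x * (2 - Haux δ (x ^ 2 * δ / 2))) x := by
  have h1 := (hasDerivAt_stdNormalCDF x).const_mul 2
  have h2 : HasDerivAt (fun y => stdNormalCDF (y * (1 + δ)))
      (gaussianPDFReal 0 1 (x * (1 + δ)) * (1 + δ)) x :=
    (hasDerivAt_stdNormalCDF (x * (1 + δ))).comp x (hasDerivAt_mul_const (1 + δ))
  have h3 : HasDerivAt (fun y => stdNormalCDF (y * (1 - δ)))
      (gaussianPDFReal 0 1 (x * (1 - δ)) * (1 - δ)) x :=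
    (hasDerivAt_stdNormalCDF (x * (1 - δ))).comp x (hasDerivAt_mul_const (1 - δ))
  have h := (h1.sub h2).sub h3
  rw [← pdf_identity]
  exact h

/-! ### Monotonicity of `phi` -/

lemma phi_lt_phi {δ : ℝ} (hδ0 : 0 < δ) (hδ1 : δ < 1) {x y : ℝ} (hx : 0 < x) (hxy : x < y)
    (hy : y ^ 2 < max (3 / 2) (2 * Real.log (1 / (1 - δ)))) : phi δ x < phi δ y := by
  set M : ℝ := max (3 / 2) (2 * Real.log (1 / (1 - δ))) with hMdef
  have hM0 : (0:ℝ) < M := lt_of_lt_of_le (by norm_num) (le_max_left _ _)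
  have hmono : StrictMonoOn (phi δ) (Set.Icc 0 (Real.sqrt M)) := by
    apply strictMonoOn_of_deriv_pos (convex_Icc _ _)
    · intro z _
      exact (hasDerivAt_phi δ z).continuousAt.continuousWithinAt
    · intro z hz
      rw [interior_Icc] at hz
      rw [(hasDerivAt_phi δ z).deriv]
      have hgz := gaussianPDFReal_pos 0 1 z one_ne_zero
      have hz0 := hz.1
      have hzM : z ^ 2 < M := by
        nlinarith [Real.sq_sqrt hM0.le, hz.2, hz0]
      have hH := key_pos hδ0 hδ1 (t := z ^ 2 * δ / 2) (by positivity)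
        (by rw [← hMdef]; nlinarith)
      exact mul_pos hgz (by linarith)
  have hyM : y < Real.sqrt M := by
    rw [show y = Real.sqrt (y ^ 2) by rw [Real.sqrt_sq (by linarith)]]
    exact Real.sqrt_lt_sqrt (sq_nonneg y) hy
  exact hmono ⟨hx.le, by linarith⟩ ⟨by linarith, hyM.le⟩ hxy

lemma phi_gt_phi {δ : ℝ} (hδ0 : 0 < δ) (hδ1 : δ < 1) {x y : ℝ} (hx : 0 < x) (hxy : x < y)
    (hx2 : 22 + 2 * Real.log (1 / (1 - δ)) ≤ x ^ 2) : phi δ y < phi δ x := by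
  have hanti : StrictAntiOn (phi δ) (Set.Ici x) := by
    apply strictAntiOn_of_deriv_neg (convex_Ici _)
    · intro z _
      exact (hasDerivAt_phi δ z).continuousAt.continuousWithinAt
    · intro z hz
      rw [interior_Ici] at hz
      rw [(hasDerivAt_phi δ z).deriv]
      have hgz := gaussianPDFReal_pos 0 1 z one_ne_zero
      have hzx : x < z := hz
      have hz2 : 22 + 2 * Real.log (1 / (1 - δ)) ≤ z ^ 2 := by nlinarith
      have hH := key_neg hδ0 hδ1 (t := z ^ 2 * δ / 2) (by nlinarith)
      exact mul_neg_of_pos_of_neg hgz (by linarith)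
  exact hanti (Set.self_mem_Ici) (Set.mem_Ici.mpr hxy.le) hxy

/-! ### Main theorem -/

/-- In the weak adversary regime `ε/τ < min_{j : θ(j) > 0} θ(j)`, there is a universal
constant `K0 > 0` such that `s_n` is strictly increasing when
`n < (1/τ² − 1)·max{3/2, 2 min_{j : θ(j) > 0} log(1/(1 − ε/(θ(j)τ)))}` and strictly
decreasing when `n ≥ (1/τ² − 1)·(K0 + 2 max_{j : θ(j) > 0} log(1/(1 − ε/(θ(j)τ))))`.
(Since `max(c, min_j x_j) = min_j max(c, x_j)`, the threshold conditions are expressed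
equivalently as `∀ j` with `θ(j) > 0`.) -/
theorem berStrip_two_stages :
    ∃ K0 : ℝ, 0 < K0 ∧
      ∀ (d : ℕ) (W ε : ℝ) (θ : Fin d → ℝ) (τ : ℝ),
        0 < W → 0 < ε → (∀ j, 0 ≤ θ j) → τ ∈ Set.Ioo (0 : ℝ) 1 → θ ≠ 0 →
        (∀ j, 0 < θ j → ε / τ < θ j) →
        (∀ m n : ℕ, 1 ≤ m → m < n →
          (∀ j, 0 < θ j →
            (n : ℝ) < (1 / τ ^ 2 - 1)
              * max (3/2) (2 * Real.log (1 / (1 - ε / (θ j * τ))))) →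
          berStrip d W ε θ τ m < berStrip d W ε θ τ n) ∧
        (∀ m n : ℕ, 1 ≤ m → m < n →
          (∀ j, 0 < θ j →
            (1 / τ ^ 2 - 1) * (K0 + 2 * Real.log (1 / (1 - ε / (θ j * τ)))) ≤ (m : ℝ)) →
          berStrip d W ε θ τ n < berStrip d W ε θ τ m) := by
  refine ⟨22, by norm_num, ?_⟩
  intro d W ε θ τ hW hε hθnn hτ hθne hweak
  obtain ⟨hτ0, hτ1⟩ := hτ
  have hτ2 : τ ^ 2 < 1 := by nlinarith
  have h1τ2 : (0:ℝ) < 1 - τ ^ 2 := by linarith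
  have hC : (0:ℝ) < 1 / τ ^ 2 - 1 := by
    have h1 : 1 < 1 / τ ^ 2 := by rw [lt_div_iff₀ (by positivity)]; linarith
    linarith
  set x : ℕ → ℝ := fun n => τ * Real.sqrt n / Real.sqrt (1 - τ ^ 2) with hxdef
  have hxpos : ∀ n : ℕ, 1 ≤ n → 0 < x n := by
    intro n hn
    have h1 : (0:ℝ) < (n:ℝ) := by exact_mod_cast hn
    rw [hxdef]
    have h2 : (0:ℝ) < Real.sqrt n := Real.sqrt_pos.mpr h1
    positivity
  have hxsq : ∀ n : ℕ, (x n) ^ 2 = (n:ℝ) / (1 / τ ^ 2 - 1) := by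
    intro n
    rw [hxdef]
    simp only
    rw [div_pow, mul_pow, Real.sq_sqrt (Nat.cast_nonneg n), Real.sq_sqrt h1τ2.le,
      show 1 / τ ^ 2 - 1 = (1 - τ ^ 2) / τ ^ 2 by field_simp]
    rw [div_div_eq_mul_div]
    ring
  have hxmono : ∀ m n : ℕ, m < n → x m < x n := by
    intro m n h
    rw [hxdef]
    simp only
    have hs : Real.sqrt m < Real.sqrt n :=
      Real.sqrt_lt_sqrt (Nat.cast_nonneg m) (by exact_mod_cast h)
    have hd : (0:ℝ) < Real.sqrt (1 - τ ^ 2) := Real.sqrt_pos.mpr h1τ2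
    gcongr
  have hδfacts : ∀ j, 0 < θ j → 0 < ε / (θ j * τ) ∧ ε / (θ j * τ) < 1 := by
    intro j hθj
    constructor
    · exact div_pos hε (by positivity)
    · rw [div_lt_one (by positivity)]
      have h := hweak j hθj
      calc ε = ε / τ * τ := by field_simp
        _ < θ j * τ := mul_lt_mul_of_pos_right h hτ0
  have hne : (Finset.univ.filter (fun j => 0 < θ j)).Nonempty := by
    obtain ⟨j, hj⟩ := Function.ne_iff.mp hθne
    exact ⟨j, Finset.mem_filter.mpr ⟨Finset.mem_univ _,
      lt_of_le_of_ne (hθnn j) (by simpa [eq_comm] using hj)⟩⟩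
  constructor
  · intro m n hm hmn hcond
    unfold berStrip
    apply mul_lt_mul_of_pos_left _ (by positivity : (0:ℝ) < 2 * W * τ)
    apply Finset.sum_lt_sum_of_nonempty hne
    intro j hj
    have hθj : 0 < θ j := (Finset.mem_filter.mp hj).2
    obtain ⟨hδ0, hδ1⟩ := hδfacts j hθj
    apply mul_lt_mul_of_pos_left _ hθj
    apply phi_lt_phi hδ0 hδ1 (hxpos m hm) (hxmono m n hmn)
    rw [hxsq n, div_lt_iff₀ hC, mul_comm]
    exact hcond j hθj
  · intro m n hm hmn hcond
    unfold berStrip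
    apply mul_lt_mul_of_pos_left _ (by positivity : (0:ℝ) < 2 * W * τ)
    apply Finset.sum_lt_sum_of_nonempty hne
    intro j hj
    have hθj : 0 < θ j := (Finset.mem_filter.mp hj).2
    obtain ⟨hδ0, hδ1⟩ := hδfacts j hθj
    apply mul_lt_mul_of_pos_left _ hθj
    apply phi_gt_phi hδ0 hδ1 (hxpos m hm) (hxmono m n hmn)
    rw [hxsq m, le_div_iff₀ hC, mul_comm]
    exact hcond j hθj
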